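/- Let A₁₁, A₂₂, k₁ ∈ ℝ with 0 < A₁₁ < A₂₂, and let φ₁, φ₂ : ℝ → ℝ be twice-differentiable functions satisfying, for all t ∈ ℝ, the system A₁₁·(φ₁''(t) + φ₂''(t)) = -k₁·φ₁(t) and A₁₁·φ₁''(t) + A₂₂·φ₂''(t) = 0. Then: (i) the function t ↦ A₁₁·φ₁'(t) + A₂₂·φ₂'(t) is constant; and (ii) φ₁ satisfies the harmonic oscillator equation φ₁''(t) + ω²·φ₁(t) = 0 for all t, where ω² = (k₁/A₁₁)·(A₂₂/(A₂₂ - A₁₁)). -/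

import Mathlib

theorem ziegler_gravity_reduced_system
    (A₁₁ A₂₂ k₁ : ℝ) (hA₁₁ : 0 < A₁₁) (hA : A₁₁ < A₂₂)
    (φ₁ φ₂ : ℝ → ℝ)
    (hφ₁ : Differentiable ℝ φ₁) (hφ₁' : Differentiable ℝ (deriv φ₁))
    (hφ₂ : Differentiable ℝ φ₂) (hφ₂' : Differentiable ℝ (deriv φ₂))
    (heq1 : ∀ t : ℝ, A₁₁ * (deriv (deriv φ₁) t + deriv (deriv φ₂) t) = -k₁ * φ₁ t)
    (heq2 : ∀ t : ℝ, A₁₁ * deriv (deriv φ₁) t + A₂₂ * deriv (deriv φ₂) t = 0) :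
    (∃ K : ℝ, ∀ t : ℝ, A₁₁ * deriv φ₁ t + A₂₂ * deriv φ₂ t = K) ∧
      ∀ t : ℝ,
        deriv (deriv φ₁) t + (k₁ / A₁₁) * (A₂₂ / (A₂₂ - A₁₁)) * φ₁ t = 0 := by
  constructor
  · refine ⟨A₁₁ * deriv φ₁ 0 + A₂₂ * deriv φ₂ 0, fun t => ?_⟩
    have hg : Differentiable ℝ (fun t => A₁₁ * deriv φ₁ t + A₂₂ * deriv φ₂ t) :=
      (hφ₁'.const_mul _).add (hφ₂'.const_mul _)
    have hd : ∀ x, deriv (fun t => A₁₁ * deriv φ₁ t + A₂₂ * deriv φ₂ t) x = 0 := by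
      intro x
      rw [deriv_fun_add ((hφ₁'.const_mul _).differentiableAt) ((hφ₂'.const_mul _).differentiableAt),
        deriv_const_mul _ (hφ₁'.differentiableAt), deriv_const_mul _ (hφ₂'.differentiableAt)]
      exact heq2 x
    exact is_const_of_deriv_eq_zero hg hd t 0
  · intro t
    have h1 := heq1 t
    have h2 := heq2 t
    have hA0 : A₁₁ ≠ 0 := ne_of_gt hA₁₁
    have hA2 : A₂₂ ≠ 0 := ne_of_gt (hA₁₁.trans hA)
    have hAd : A₂₂ - A₁₁ ≠ 0 := ne_of_gt (sub_pos.mpr hA)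
    field_simp
    nlinarith [h1, h2]
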